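/- Let Λ = (e²+1)/(e²−1), π_n = exp(−|n|), and define the operators H⁺ and H⁻ on ℓ²(ℤ, ℝ) by (H⁺u)_n = −∑_{m∈ℤ} exp(−|n−m|) u_m + (Λ − 1 + |n|) u_n and (H⁻u)_n = −∑_{m∈ℤ} exp(−|n−m|) u_m + (Λ + |n|) u_n. Then H⁺π = −π and H⁻π = 0; i.e., the peakon is an eigenvector of the linearization operator H⁺ with eigenvalue −1 and lies in the kernel of H⁻. -/
import Mathlib


/-- `Λ = (e²+1)/(e²−1)`. -/
noncomputable def Lam : ℝ := (Real.exp 1 ^ 2 + 1) / (Real.exp 1 ^ 2 - 1)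

/-- The operator `H⁺` of the linearization at the peakon:
`(H⁺u)_n = -∑_{m∈ℤ} exp (-|n-m|) u_m + (Λ - 1 + |n|) u_n`. -/
noncomputable def Hplus (u : ℤ → ℝ) (n : ℤ) : ℝ :=
  -(∑' m : ℤ, Real.exp (-|(n : ℝ) - (m : ℝ)|) * u m) + (Lam - 1 + |(n : ℝ)|) * u n

/-- The operator `H⁻`:
`(H⁻u)_n = -∑_{m∈ℤ} exp (-|n-m|) u_m + (Λ + |n|) u_n`. -/
noncomputable def Hminus (u : ℤ → ℝ) (n : ℤ) : ℝ :=
  -(∑' m : ℤ, Real.exp (-|(n : ℝ) - (m : ℝ)|) * u m) + (Lam + |(n : ℝ)|) * u n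

open Real in
lemma keyNat (n : ℕ) :
    HasSum (fun m : ℤ => Real.exp (-|(n : ℝ) - (m : ℝ)|) * Real.exp (-|(m : ℝ)|))
      ((Lam + |(n : ℝ)|) * Real.exp (-|(n : ℝ)|)) := by
  set f : ℤ → ℝ := fun m => Real.exp (-|(n : ℝ) - (m : ℝ)|) * Real.exp (-|(m : ℝ)|) with hf
  have hr0 : (0:ℝ) ≤ exp (-2) := (exp_pos _).le
  have hr1 : exp (-2) < 1 := exp_lt_one_iff.mpr (by norm_num)
  have hgeo : HasSum (fun k : ℕ => exp (-(n:ℝ)-2) * exp (-2) ^ k)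
      (exp (-(n:ℝ)-2) * (1 - exp (-2))⁻¹) :=
    (hasSum_geometric_of_lt_one hr0 hr1).mul_left _
  have hneg : HasSum (fun k : ℕ => f (-(k+1))) (exp (-(n:ℝ)-2) * (1 - exp (-2))⁻¹) := by
    refine hgeo.congr_fun fun k => ?_
    rw [hf]
    simp only
    have h1 : ((-((k:ℤ)+1) : ℤ) : ℝ) = -((k:ℝ)+1) := by push_cast; ring
    rw [h1, ← exp_nat_mul, ← Real.exp_add, ← Real.exp_add]
    congr 1
    rw [sub_neg_eq_add, abs_of_nonneg (by positivity),
      abs_of_nonpos (neg_nonpos.mpr (by positivity))]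
    ring
  have htail : HasSum (fun k : ℕ => f ((k + (n+1) : ℕ) : ℤ))
      (exp (-(n:ℝ)-2) * (1 - exp (-2))⁻¹) := by
    refine hgeo.congr_fun fun k => ?_
    rw [hf]
    simp only
    have h1 : (((k + (n+1) : ℕ) : ℤ) : ℝ) = (k:ℝ) + (n:ℝ) + 1 := by push_cast; ring
    rw [h1, ← exp_nat_mul, ← Real.exp_add, ← Real.exp_add]
    congr 1
    rw [abs_of_nonpos (by nlinarith [Nat.cast_nonneg (α := ℝ) k]),
      abs_of_nonneg (by positivity)]
    ring
  have hpos : HasSum (fun k : ℕ => f k)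
      (exp (-(n:ℝ)-2) * (1 - exp (-2))⁻¹ + ((n:ℝ)+1) * exp (-(n:ℝ))) := by
    have := (hasSum_nat_add_iff (f := fun k : ℕ => f k) (n+1)).mp htail
    have hconst : ∀ i ∈ Finset.range (n+1), f i = exp (-(n:ℝ)) := by
      intro i hi
      have hi' : (i:ℝ) ≤ (n:ℝ) := by
        exact_mod_cast Nat.le_of_lt_succ (Finset.mem_range.mp hi)
      rw [hf]; simp only
      push_cast
      rw [abs_of_nonneg (sub_nonneg.mpr hi'), abs_of_nonneg (Nat.cast_nonneg i),
        ← Real.exp_add]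
      congr 1; ring
    have hsum : ∑ i ∈ Finset.range (n+1), f i = ((n:ℝ)+1) * exp (-(n:ℝ)) := by
      rw [Finset.sum_congr rfl hconst, Finset.sum_const, Finset.card_range,
        nsmul_eq_mul]
      push_cast; ring
    rwa [hsum] at this
  have htot := hpos.of_nat_of_neg_add_one hneg
  have heq : exp (-(n:ℝ)-2) * (1 - exp (-2))⁻¹ + ((n:ℝ)+1) * exp (-(n:ℝ)) +
      exp (-(n:ℝ)-2) * (1 - exp (-2))⁻¹ = (Lam + |(n:ℝ)|) * exp (-|(n:ℝ)|) := by
    rw [abs_of_nonneg (Nat.cast_nonneg n), Lam]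
    have he2 : exp (-2:ℝ) = (exp 1 ^ 2)⁻¹ := by
      rw [show ((2:ℝ)) = ((2:ℕ):ℝ) by norm_num, ← Real.exp_nat_mul, ← Real.exp_neg]
      norm_num
    have hE : (1:ℝ) < exp 1 ^ 2 := by nlinarith [Real.exp_one_gt_d9]
    have h2 : exp 1 ^ 2 ≠ 0 := by positivity
    have h1 : exp 1 ^ 2 - 1 ≠ 0 := by intro h; nlinarith
    have hx : exp (-(n:ℝ)-2) * (1 - exp (-2))⁻¹ = exp (-(n:ℝ)) / (exp 1 ^ 2 - 1) := by
      rw [he2, show exp (-(n:ℝ)-2) = exp (-(n:ℝ)) * (exp 1 ^ 2)⁻¹ by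
        rw [← he2, ← Real.exp_add]; ring_nf]
      rw [show (1 - (exp 1 ^ 2)⁻¹) = (exp 1 ^ 2 - 1) / (exp 1 ^ 2) by field_simp, inv_div]
      field_simp
    rw [hx]
    generalize hE2 : exp 1 ^ 2 = E at h1 h2 ⊢
    field_simp
    ring
  rwa [heq] at htot

open Real in
lemma keyInt (n : ℤ) :
    HasSum (fun m : ℤ => Real.exp (-|(n : ℝ) - (m : ℝ)|) * Real.exp (-|(m : ℝ)|))
      ((Lam + |(n : ℝ)|) * Real.exp (-|(n : ℝ)|)) := by
  rcases le_or_gt 0 n with h | h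
  · have hc : ((n.toNat : ℕ) : ℝ) = (n : ℝ) := by exact_mod_cast Int.toNat_of_nonneg h
    have hk := keyNat n.toNat
    rwa [hc] at hk
  · have h' : (0:ℤ) ≤ -n := by omega
    have hc : (((-n).toNat : ℕ) : ℝ) = ((-n : ℤ) : ℝ) := by
      exact_mod_cast Int.toNat_of_nonneg h'
    have hk := keyNat (-n).toNat
    rw [hc] at hk
    push_cast at hk
    have hfun : (fun m : ℤ => Real.exp (-|(n : ℝ) - (m : ℝ)|) * Real.exp (-|(m : ℝ)|)) ∘
        (Equiv.neg ℤ) = fun m : ℤ => Real.exp (-|-(n : ℝ) - (m : ℝ)|) * Real.exp (-|(m : ℝ)|) := by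
      funext m
      simp only [Function.comp_apply, Equiv.neg_apply]
      push_cast
      rw [show (n:ℝ) - (-(m:ℝ)) = -(-(n:ℝ) - m) by ring, abs_neg, abs_neg]
    rw [← hfun] at hk
    have := ((Equiv.neg ℤ).hasSum_iff).mp hk
    rwa [abs_neg] at this


/-- The peakon `π ∈ ℓ²(ℤ, ℝ)`, `π_n = exp (-|n|)`, satisfies `H⁺π = -π` and
`H⁻π = 0`: it is an eigenvector of `H⁺` with eigenvalue `-1` and lies in the
kernel of `H⁻`. -/
theorem peakon_eigenvector_of_linearization
    (π : lp (fun _ : ℤ => ℝ) 2) (hπ : ∀ n : ℤ, π n = Real.exp (-|(n : ℝ)|)) :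
    (∀ n : ℤ, Hplus (fun m => π m) n = -(π n)) ∧
    (∀ n : ℤ, Hminus (fun m => π m) n = 0) := by
  constructor
  · intro n
    unfold Hplus
    simp only [hπ]
    rw [(keyInt n).tsum_eq]
    ring
  · intro n
    unfold Hminus
    simp only [hπ]
    rw [(keyInt n).tsum_eq]
    ring
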